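/- Let a > 0 and let f_a = f_{a,1/2}. For every x ∈ (0,1), the sequence of iterates f_a^n(x) converges either to a fixed point of f_a lying in (0,1), or to one of the two points of a periodic orbit of f_a of period 2 contained in (0,1) (i.e., the even and odd subsequences f_a^{2n}(x) and f_a^{2n+1}(x) converge to points p, q ∈ (0,1) with f_a(p) = q and f_a(q) = p). -/

import Mathlib

/-- The map `f_{a,b}(x) = x / (x + (1-x) * exp (a (x - b)))`. -/
noncomputable def chaosMap (a b : ℝ) : ℝ → ℝ :=
  fun x => x / (x + (1 - x) * Real.exp (a * (x - b)))

open Real Filter Set Topology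


noncomputable def sig (y : ℝ) : ℝ := Real.exp y / (Real.exp y + 1)
lemma exp_add_one_pos (y : ℝ) : 0 < Real.exp y + 1 := by positivity
lemma sig_pos (y : ℝ) : 0 < sig y := div_pos (exp_pos y) (exp_add_one_pos y)
lemma sig_lt_one (y : ℝ) : sig y < 1 := by
  rw [sig, div_lt_one (exp_add_one_pos y)]; linarith
lemma sig_zero : sig 0 = 1/2 := by simp [sig]; norm_num
lemma sig_neg (y : ℝ) : sig (-y) = 1 - sig y := by
  have h := exp_add_one_pos y
  have h' := exp_pos y
  rw [sig, sig, Real.exp_neg]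
  field_simp
  ring
lemma sig_strictMono : StrictMono sig := by
  intro u v huv
  have hu := exp_add_one_pos u
  have hv := exp_add_one_pos v
  rw [sig, sig, div_lt_div_iff₀ hu hv]
  have := Real.exp_lt_exp.2 huv
  nlinarith
lemma continuous_sig : Continuous sig :=
  Real.continuous_exp.div (Real.continuous_exp.add continuous_const)
    (fun y => (exp_add_one_pos y).ne')
lemma hasDerivAt_sig (y : ℝ) :
    HasDerivAt sig (Real.exp y / (Real.exp y + 1)^2) y := by
  have h := exp_add_one_pos y
  have := (Real.hasDerivAt_exp y).div ((Real.hasDerivAt_exp y).add_const 1) h.ne'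
  refine this.congr_deriv ?_
  field_simp
  ring
lemma deriv_sig : deriv sig = fun y => Real.exp y / (Real.exp y + 1)^2 := by
  funext y; exact (hasDerivAt_sig y).deriv
lemma hasDerivAt_deriv_sig (y : ℝ) :
    HasDerivAt (deriv sig) (Real.exp y * (1 - Real.exp y) / (Real.exp y + 1)^3) y := by
  rw [deriv_sig]
  have h := exp_add_one_pos y
  have h2 : ((Real.exp y + 1)^2) ≠ 0 := by positivity
  have := (Real.hasDerivAt_exp y).div
    (((Real.hasDerivAt_exp y).add_const 1).pow 2) h2
  refine this.congr_deriv ?_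
  simp only [Pi.pow_apply]
  field_simp
  ring
lemma sig_strictConcaveOn : StrictConcaveOn ℝ (Ici (0:ℝ)) sig := by
  apply strictConcaveOn_of_deriv2_neg (convex_Ici 0) continuous_sig.continuousOn
  intro y hy
  rw [interior_Ici] at hy
  have hy : (0:ℝ) < y := hy
  have : deriv^[2] sig y = Real.exp y * (1 - Real.exp y) / (Real.exp y + 1)^3 := by
    simp only [Function.iterate_succ, Function.iterate_zero, Function.comp_apply, id]
    exact (hasDerivAt_deriv_sig y).deriv
  rw [this]
  have h1 : 1 < Real.exp y := by
    rw [← Real.exp_zero]; exact Real.exp_lt_exp.2 hy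
  have h2 : (0:ℝ) < (Real.exp y + 1)^3 := by positivity
  apply div_neg_of_neg_of_pos _ h2
  nlinarith [exp_pos y]
lemma sig_star {u v : ℝ} (hu : 0 < u) (huv : u < v) :
    (sig v - 1/2) * u < (sig u - 1/2) * v := by
  have hv : 0 < v := hu.trans huv
  have hb : (0:ℝ) < u/v := div_pos hu hv
  have ha : (0:ℝ) < 1 - u/v := by
    have : u/v < 1 := (div_lt_one hv).2 huv; linarith
  have key := sig_strictConcaveOn.2 (Set.self_mem_Ici)
    (Set.mem_Ici.2 hv.le) hv.ne ha hb (by ring)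
  simp only [smul_eq_mul, smul_zero, add_zero, mul_zero] at key
  rw [sig_zero] at key
  have heq : 0 + u/v * v = u := by field_simp; ring
  rw [heq] at key
  have h2 : ((1 - u / v) * (1 / 2) + u / v * sig v) * v < sig u * v :=
    mul_lt_mul_of_pos_right key hv
  have h3 : ((1 - u / v) * (1 / 2) + u / v * sig v) * v
      = (v - u) * (1/2) + u * sig v := by field_simp
  nlinarith [h2, h3]
lemma sig_slope_tendsto :
    Tendsto (fun t => (sig t - 1/2) / t) (nhdsWithin 0 {(0:ℝ)}ᶜ) (nhds (1/4)) := by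
  have h := (hasDerivAt_iff_tendsto_slope).1 (hasDerivAt_sig 0)
  have : Real.exp 0 / (Real.exp 0 + 1)^2 = 1/4 := by norm_num
  rw [this] at h
  convert h using 2 with t
  rw [slope_def_field, sig_zero]
  rw [sub_zero]

-- new material
lemma sig_gt_half {y : ℝ} (hy : 0 < y) : 1/2 < sig y := by
  have := sig_strictMono hy
  rwa [sig_zero] at this

lemma sig_slope_tendsto' :
    Tendsto (fun t => (sig t - 1/2) / t) (nhdsWithin 0 (Ioi 0)) (nhds (1/4)) :=
  sig_slope_tendsto.mono_left <| nhdsWithin_mono _ (fun t ht => ne_of_gt ht)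

/-- `sig y - 1/2 < y / 4` for `y > 0`. -/
lemma sig_lt_quarter {y : ℝ} (hy : 0 < y) : sig y - 1/2 < y / 4 := by
  have h2 : 0 < y/2 := by linarith
  have hstar := sig_star h2 (by linarith : y/2 < y)
  -- (sig y - 1/2) * (y/2) < (sig (y/2) - 1/2) * y
  have hup : (sig (y/2) - 1/2) / (y/2) ≤ 1/4 := by
    refine ge_of_tendsto sig_slope_tendsto' ?_
    filter_upwards [Ioo_mem_nhdsGT_of_mem (Set.left_mem_Ico.2 h2)] with t ht
    have hstar2 := sig_star ht.1 ht.2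
    rw [div_le_div_iff₀ h2 ht.1]
    nlinarith
  rw [div_le_iff₀ h2] at hup
  nlinarith

/-- For any `c < 1/4` and `δ > 0` there is `t ∈ (0, δ)` with `c * t < sig t - 1/2`. -/
lemma exists_slope_gt {c δ : ℝ} (hc : c < 1/4) (hδ : 0 < δ) :
    ∃ t, 0 < t ∧ t < δ ∧ c * t < sig t - 1/2 := by
  have hev : ∀ᶠ t in nhdsWithin 0 (Ioi 0), (sig t - 1/2)/t > c :=
    sig_slope_tendsto'.eventually (eventually_gt_nhds hc)
  have hev2 : ∀ᶠ t in nhdsWithin 0 (Ioi 0), t ∈ Ioo (0:ℝ) δ :=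
    Ioo_mem_nhdsGT_of_mem (Set.left_mem_Ico.2 hδ)
  obtain ⟨t, h1, h2⟩ := (hev.and hev2).exists
  refine ⟨t, h2.1, h2.2, ?_⟩
  rw [gt_iff_lt, lt_div_iff₀ h2.1] at h1
  linarith

/-- An orbit cannot stay forever in a compact set on which `|· - r|`
strictly decreases under `g`. -/
lemma lyap_escape {g : ℝ → ℝ} (hg : Continuous g) {r : ℝ}
    {K : Set ℝ} (hK : IsCompact K)
    (hdec : ∀ w ∈ K, |g w - r| < |w - r|)
    {z : ℕ → ℝ} (hz : ∀ n, z (n+1) = g (z n))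
    (hzK : ∀ n, z n ∈ K) : False := by
  have hcont : ContinuousOn (fun w => |w - r| - |g w - r|) K :=
    (((continuous_id.sub continuous_const).abs).sub
      ((hg.sub continuous_const).abs)).continuousOn
  obtain ⟨w₀, hw₀K, hw₀min⟩ := hK.exists_isMinOn ⟨z 0, hzK 0⟩ hcont
  set δ := |w₀ - r| - |g w₀ - r| with hδ
  have hδpos : 0 < δ := sub_pos.2 (hdec w₀ hw₀K)
  have hstep : ∀ n, |z (n+1) - r| ≤ |z n - r| - δ := by
    intro n
    have := hw₀min (hzK n)
    simp only [Set.mem_setOf_eq] at this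
    have h2 : δ ≤ |z n - r| - |g (z n) - r| := this
    rw [hz n]; linarith
  have hiter : ∀ n, |z n - r| ≤ |z 0 - r| - n * δ := by
    intro n
    induction n with
    | zero => simp
    | succ k ih =>
      have := hstep k
      push_cast
      linarith
  obtain ⟨n, hn⟩ := exists_nat_gt (|z 0 - r| / δ)
  have := hiter n
  have habs : (0:ℝ) ≤ |z n - r| := abs_nonneg _
  rw [div_lt_iff₀ hδpos] at hn
  linarith

/-- Lyapunov convergence: if `|· - r|` strictly decreases under `g` on a
compact set `K` (off `r`), `r` is fixed, and the orbit stays in `K`,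
then the orbit converges to `r`. -/
lemma lyap_tendsto {g : ℝ → ℝ} (hg : Continuous g) {r : ℝ} (hr : g r = r)
    {K : Set ℝ} (hK : IsCompact K)
    (hdec : ∀ w ∈ K, w ≠ r → |g w - r| < |w - r|)
    {z : ℕ → ℝ} (hz : ∀ n, z (n+1) = g (z n)) (hzK : ∀ n, z n ∈ K) :
    Tendsto z atTop (𝓝 r) := by
  set d : ℕ → ℝ := fun n => |z n - r| with hd
  have hstep : ∀ n, d (n+1) ≤ d n := by
    intro n
    rcases eq_or_ne (z n) r with h | h
    · simp [hd, hz n, h, hr]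
    · show |z (n+1) - r| ≤ |z n - r|
      rw [hz n]; exact (hdec _ (hzK n) h).le
  have hanti : Antitone d := antitone_nat_of_succ_le hstep
  have hbdd : BddBelow (Set.range d) := ⟨0, by rintro _ ⟨n, rfl⟩; positivity⟩
  set L := ⨅ n, d n with hLdef
  have hL : Tendsto d atTop (𝓝 L) := tendsto_atTop_ciInf hanti hbdd
  have hLle : ∀ n, L ≤ d n := fun n => ciInf_le hbdd n
  have hL0 : 0 ≤ L := le_ciInf fun n => abs_nonneg _
  rcases hL0.eq_or_lt with hL0' | hLpos
  · rw [tendsto_iff_dist_tendsto_zero]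
    have : (fun n => dist (z n) r) = d := by
      funext n; rw [Real.dist_eq]
    rw [this]
    have : (0:ℝ) = L := hL0'
    rw [this]
    exact hL
  · exfalso
    have hclosed : IsClosed {w : ℝ | L ≤ |w - r|} :=
      isClosed_le continuous_const ((continuous_id.sub continuous_const).abs)
    have hK' : IsCompact (K ∩ {w : ℝ | L ≤ |w - r|}) := hK.inter_right hclosed
    refine lyap_escape hg hK' (r := r) ?_ hz (fun n => ⟨hzK n, hLle n⟩)
    intro w hw
    refine hdec w hw.1 ?_
    intro hwr
    have := hw.2
    rw [hwr] at this
    simp at this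
    exact absurd this (not_le.2 hLpos)

noncomputable def Fm (a y : ℝ) : ℝ := y - a * (sig y - 1/2)
noncomputable def phi (a y : ℝ) : ℝ := a * (sig y - 1/2) - y

lemma Fm_eq_neg_phi (a y : ℝ) : Fm a y = -(phi a y) := by
  rw [Fm, phi]; ring

lemma phi_neg (a y : ℝ) : phi a (-y) = -(phi a y) := by
  rw [phi, phi, sig_neg]; ring

lemma phi_zero (a : ℝ) : phi a 0 = 0 := by rw [phi, sig_zero]; ring

lemma Fm_zero (a : ℝ) : Fm a 0 = 0 := by rw [Fm, sig_zero]; ring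

lemma continuous_phi (a : ℝ) : Continuous (phi a) :=
  (continuous_const.mul (continuous_sig.sub continuous_const)).sub continuous_id

lemma continuous_Fm (a : ℝ) : Continuous (Fm a) :=
  continuous_id.sub (continuous_const.mul (continuous_sig.sub continuous_const))

lemma sig_sub (y c : ℝ) : sig (y - c) = Real.exp y / (Real.exp y + Real.exp c) := by
  have h1 : (0:ℝ) < Real.exp (y - c) + 1 := exp_add_one_pos _
  have h2 : (0:ℝ) < Real.exp y + Real.exp c := by positivity
  rw [sig, Real.exp_sub]
  rw [div_add' _ _ _ (exp_pos c).ne']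
  rw [div_div_div_cancel_right₀]
  · rw [one_mul]
  · exact (exp_pos c).ne'

/-- Conjugacy: `chaosMap a (1/2) (sig y) = sig (Fm a y)`. -/
lemma chaosMap_sig (a y : ℝ) : chaosMap a (1/2) (sig y) = sig (Fm a y) := by
  have hE := exp_pos y
  have hE1 := exp_add_one_pos y
  have hA := exp_pos (a * (sig y - 1/2))
  rw [chaosMap, sig, Fm]
  have h1 : Real.exp y / (Real.exp y + 1) - 1/2 = sig y - 1/2 := by rw [sig]
  have hden : Real.exp y / (Real.exp y + 1) +
      (1 - Real.exp y / (Real.exp y + 1)) * Real.exp (a * (Real.exp y / (Real.exp y + 1) - 1/2))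
      = (Real.exp y + Real.exp (a * (sig y - 1/2))) / (Real.exp y + 1) := by
    rw [h1]; field_simp; ring
  rw [hden]
  have hsum : 0 < Real.exp y + Real.exp (a * (sig y - 1/2)) := by positivity
  have hstep : Real.exp y / (Real.exp y + 1) /
      ((Real.exp y + Real.exp (a * (sig y - 1/2))) / (Real.exp y + 1))
      = Real.exp y / (Real.exp y + Real.exp (a * (sig y - 1/2))) := by
    rw [div_div_div_cancel_right₀]
    exact hE1.ne'
  rw [hstep, sig_sub]

lemma sig_log {x : ℝ} (hx : x ∈ Set.Ioo (0:ℝ) 1) : sig (Real.log (x / (1 - x))) = x := by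
  obtain ⟨h0, h1⟩ := hx
  have hx1 : 0 < 1 - x := by linarith
  have hq : 0 < x / (1 - x) := div_pos h0 hx1
  rw [sig, Real.exp_log hq]
  rw [div_add' _ _ _ hx1.ne']
  have hnum : x + 1 * (1 - x) = 1 := by ring
  field_simp
  ring

lemma chaosMap_iter_sig (a : ℝ) (y : ℝ) (n : ℕ) :
    (chaosMap a (1/2))^[n] (sig y) = sig ((Fm a)^[n] y) := by
  induction n generalizing y with
  | zero => simp
  | succ k ih =>
    rw [Function.iterate_succ_apply, Function.iterate_succ_apply, chaosMap_sig, ih]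

section Dynamics

variable {a : ℝ} (ha : 0 < a)

/-- Case `a ≤ 8`: strict contraction of `|·|` off `0`. -/
lemma abs_phi_lt (ha : 0 < a) (h8 : a ≤ 8) {z : ℝ} (hz : z ≠ 0) : |phi a z| < |z| := by
  have key : ∀ w : ℝ, 0 < w → |phi a w| < |w| := by
    intro w hw
    have hs : 0 < sig w - 1/2 := by have := sig_gt_half hw; linarith
    have hq : sig w - 1/2 < w/4 := sig_lt_quarter hw
    have hup : phi a w < w := by
      rw [phi]
      nlinarith
    have hdown : -w < phi a w := by
      rw [phi]
      nlinarith
    rw [abs_of_pos hw, abs_lt]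
    exact ⟨hdown, hup⟩
  rcases lt_trichotomy z 0 with h | h | h
  · have := key (-z) (by linarith)
    rwa [phi_neg, abs_neg, abs_neg] at this
  · exact absurd h hz
  · exact key z h
end Dynamics

section Big
variable {a : ℝ}

/-- Existence of a root of `a * (sig z - 1/2) = c * z` on `(0,∞)` for `c/a < 1/4`. -/
lemma exists_root (ha : 0 < a) {c : ℝ} (hc : 0 < c) (hca : c / a < 1/4) :
    ∃ z, 0 < z ∧ a * (sig z - 1/2) = c * z := by
  obtain ⟨t, ht0, _, ht⟩ := exists_slope_gt hca one_pos
  set g : ℝ → ℝ := fun z => a * (sig z - 1/2) - c * z with hg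
  have hgc : Continuous g :=
    (continuous_const.mul (continuous_sig.sub continuous_const)).sub
      (continuous_const.mul continuous_id)
  have hgt : 0 < g t := by
    have h2 : a * (c/a * t) < a * (sig t - 1/2) := mul_lt_mul_of_pos_left ht ha
    have h3 : a * (c/a * t) = c * t := by field_simp
    simp only [hg]
    linarith
  obtain ⟨B, htB, h2⟩ : ∃ B, t < B ∧ a/(2*c) < B :=
    ⟨max t (a/(2*c)) + 1, by
      constructor
      · have := le_max_left t (a/(2*c)); linarith
      · have := le_max_right t (a/(2*c)); linarith⟩
  have hgB : g B < 0 := by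
    have h1 : sig B - 1/2 < 1/2 := by have := sig_lt_one B; linarith
    have h3 : a/2 < c * B := by
      rw [div_lt_iff₀ (by positivity : (0:ℝ) < 2*c)] at h2
      nlinarith
    have h4 : a * (sig B - 1/2) < a/2 := by nlinarith
    simp only [hg]
    linarith
  have hmem : (0:ℝ) ∈ Set.Icc (g B) (g t) := ⟨hgB.le, hgt.le⟩
  obtain ⟨z, hzI, hz⟩ := intermediate_value_Icc' htB.le hgc.continuousOn hmem
  refine ⟨z, lt_of_lt_of_le ht0 hzI.1, ?_⟩
  simp only [hg] at hz
  linarith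
end Big

section BigDyn
variable {a r R : ℝ}

lemma phi_fixed (hr : a * (sig r - 1/2) = 2 * r) : phi a r = r := by
  rw [phi]; linarith

lemma phi_lyap (ha : 0 < a) (hr0 : 0 < r) (hr : a * (sig r - 1/2) = 2 * r)
    {z : ℝ} (hz0 : 0 < z) (hzr : z ≠ r) : |phi a z - r| < |z - r| := by
  rcases lt_or_gt_of_ne hzr with h | h
  · have hstar := sig_star hz0 h
    have h1 : a * ((sig r - 1/2) * z) < a * ((sig z - 1/2) * r) :=
      mul_lt_mul_of_pos_left hstar ha
    have hlow : z < phi a z := by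
      rw [phi]; nlinarith
    have hmono : sig z < sig r := sig_strictMono h
    have hhigh : phi a z < 2*r - z := by
      rw [phi]; nlinarith
    rw [abs_of_neg (by linarith : z - r < 0), abs_lt]
    constructor <;> nlinarith [hlow, hhigh]
  · have hstar := sig_star hr0 h
    have h1 : a * ((sig z - 1/2) * r) < a * ((sig r - 1/2) * z) :=
      mul_lt_mul_of_pos_left hstar ha
    have hhigh : phi a z < z := by
      rw [phi]; nlinarith
    have hmono : sig r < sig z := sig_strictMono h
    have hlow : 2*r - z < phi a z := by
      rw [phi]; nlinarith
    rw [abs_of_pos (by linarith : 0 < z - r), abs_lt]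
    constructor <;> nlinarith [hlow, hhigh]

lemma phi_inv (ha : 0 < a) (hR0 : 0 < R) (hR : a * (sig R - 1/2) = R)
    {z : ℝ} (hz0 : 0 < z) (hzR : z ≤ R) : 0 ≤ phi a z ∧ phi a z < R := by
  constructor
  · rcases eq_or_lt_of_le hzR with h | h
    · subst h; rw [phi]; linarith
    · have hstar := sig_star hz0 h
      have h1 : a * ((sig R - 1/2) * z) < a * ((sig z - 1/2) * R) :=
        mul_lt_mul_of_pos_left hstar ha
      rw [phi]; nlinarith
  · have hmono : sig z ≤ sig R := sig_strictMono.monotone hzR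
    have h2 : a * (sig z - 1/2) ≤ R := by nlinarith
    rw [phi]; linarith

lemma Fm_drift (ha : 0 < a) (hR0 : 0 < R) (hR : a * (sig R - 1/2) = R)
    {z : ℝ} (hz : R < z) : 0 < Fm a z ∧ Fm a z < z - R := by
  constructor
  · have hstar := sig_star hR0 hz
    have h1 : a * ((sig z - 1/2) * R) < a * ((sig R - 1/2) * z) :=
      mul_lt_mul_of_pos_left hstar ha
    rw [Fm]; nlinarith
  · have hmono : sig R < sig z := sig_strictMono hz
    have h2 : R < a * (sig z - 1/2) := by nlinarith
    rw [Fm]; linarith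

lemma r_lt_R (ha : 0 < a) (hr0 : 0 < r) (hr : a * (sig r - 1/2) = 2 * r)
    (hR0 : 0 < R) (hR : a * (sig R - 1/2) = R) : 2 * r < R := by
  have hrR : r < R := by
    by_contra h
    push_neg at h
    rcases eq_or_lt_of_le h with h' | h'
    · subst h'; linarith
    · have hstar := sig_star hR0 h'
      have h1 : a * ((sig r - 1/2) * R) < a * ((sig R - 1/2) * r) :=
        mul_lt_mul_of_pos_left hstar ha
      nlinarith
  have hmono : sig r < sig R := sig_strictMono hrR
  nlinarith

end BigDyn

lemma phi_sign {a s x : ℝ} (hs : s = 1 ∨ s = -1) : phi a (s * x) = s * phi a x := by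
  rcases hs with h | h <;> subst h
  · simp
  · simpa using phi_neg a x

lemma neg_one_pow_eq (n : ℕ) : ((-1:ℝ))^n = 1 ∨ ((-1:ℝ))^n = -1 := by
  rcases Nat.even_or_odd n with h | h
  · left; exact h.neg_one_pow
  · right; exact h.neg_one_pow

lemma Fm_neg (a y : ℝ) : Fm a (-y) = -(Fm a y) := by
  rw [Fm_eq_neg_phi, Fm_eq_neg_phi, phi_neg]

lemma main_orbit {a : ℝ} (ha : 0 < a) (y₀ : ℝ) :
    ∃ P Q : ℝ, Fm a P = Q ∧ Fm a Q = P ∧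
      Filter.Tendsto (fun n => (Fm a)^[2*n] y₀) atTop (nhds P) ∧
      Filter.Tendsto (fun n => (Fm a)^[2*n+1] y₀) atTop (nhds Q) := by
  set y : ℕ → ℝ := fun n => (Fm a)^[n] y₀ with hydef
  have hyrec : ∀ n, y (n+1) = Fm a (y n) := by
    intro n; simp only [hydef]; rw [Function.iterate_succ_apply']
  set w : ℕ → ℝ := fun n => (-1:ℝ)^n * y n with hwdef
  have hwy : ∀ n, y n = (-1:ℝ)^n * w n := by
    intro n
    simp only [hwdef, ← mul_assoc, ← pow_add]
    rw [← two_mul, pow_mul]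
    norm_num
  have hwrec : ∀ n, w (n+1) = phi a (w n) := by
    intro n
    simp only [hwdef]
    rw [hyrec n, Fm_eq_neg_phi, pow_succ, phi_sign (neg_one_pow_eq n)]
    ring
  have habs : ∀ n, |w n| = |y n| := by
    intro n
    simp only [hwdef, abs_mul, abs_pow, abs_neg, abs_one, one_pow, one_mul]
  -- generic endgame from convergence of `w` to a fixed point of `phi`
  have endgame : ∀ L : ℝ, phi a L = L → Tendsto w atTop (nhds L) →
      ∃ P Q : ℝ, Fm a P = Q ∧ Fm a Q = P ∧
        Filter.Tendsto (fun n => (Fm a)^[2*n] y₀) atTop (nhds P) ∧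
        Filter.Tendsto (fun n => (Fm a)^[2*n+1] y₀) atTop (nhds Q) := by
    intro L hL hconv
    refine ⟨L, -L, ?_, ?_, ?_, ?_⟩
    · rw [Fm_eq_neg_phi, hL]
    · rw [Fm_neg, Fm_eq_neg_phi, hL, neg_neg]
    · have h2n : Tendsto (fun n : ℕ => 2*n) atTop atTop :=
        StrictMono.tendsto_atTop (fun m n h => by omega)
      have hc := hconv.comp h2n
      have heq : ∀ n : ℕ, (Fm a)^[2*n] y₀ = w (2*n) := by
        intro n
        have h := hwy (2*n)
        rw [pow_mul] at h
        norm_num at h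
        simp only [hydef] at h
        exact h
      simp only [Function.comp_def] at hc
      exact Tendsto.congr (fun n => (heq n).symm) hc
    · have h2n : Tendsto (fun n : ℕ => 2*n+1) atTop atTop :=
        StrictMono.tendsto_atTop (fun m n h => by omega)
      have hc := hconv.comp h2n
      simp only [Function.comp_def] at hc
      have hneg := hc.neg
      have heq : ∀ n : ℕ, (Fm a)^[2*n+1] y₀ = -w (2*n+1) := by
        intro n
        have h := hwy (2*n+1)
        rw [pow_succ, pow_mul] at h
        norm_num at h
        simp only [hydef] at h
        exact h
      exact Tendsto.congr (fun n => (heq n).symm) hneg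
  rcases le_or_gt a 8 with h8 | h8
  -- small a: w → 0
  · have hK : ∀ n, w n ∈ Set.Icc (-|w 0|) (|w 0|) := by
      intro n
      have hstep : ∀ m, |w (m+1)| ≤ |w m| := by
        intro m
        rcases eq_or_ne (w m) 0 with h | h
        · rw [hwrec m, h, phi_zero]
        · rw [hwrec m]; exact (abs_phi_lt ha h8 h).le
      have hmono : ∀ m, |w m| ≤ |w 0| := by
        intro m
        induction m with
        | zero => exact le_rfl
        | succ k ih => exact (hstep k).trans ih
      exact abs_le.1 (hmono n)
    have hconv : Tendsto w atTop (nhds 0) := by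
      refine lyap_tendsto (continuous_phi a) (phi_zero a) isCompact_Icc ?_ hwrec hK
      intro v _ hv
      rw [sub_zero, sub_zero]
      exact abs_phi_lt ha h8 hv
    exact endgame 0 (phi_zero a) hconv
  -- large a
  · obtain ⟨r, hr0, hr⟩ := exists_root ha (c := 2) two_pos
      (by rw [div_lt_iff₀ ha]; linarith)
    obtain ⟨R, hR0, hR⟩ := exists_root ha (c := 1) one_pos
      (by rw [div_lt_iff₀ ha]; linarith)
    rw [one_mul] at hR
    have h2rR : 2 * r < R := r_lt_R ha hr0 hr hR0 hR
    have hrR : r < R := by linarith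
    -- all orbits eventually enter `[-R, R]`
    have bound_in : ∀ z : ℝ, |z| ≤ R → |Fm a z| ≤ R := by
      have key : ∀ z : ℝ, 0 ≤ z → z ≤ R → |Fm a z| ≤ R := by
        intro z hz0 hzR
        rcases eq_or_lt_of_le hz0 with h | h
        · rw [← h, Fm_zero, abs_zero]; exact hR0.le
        · obtain ⟨h1, h2⟩ := phi_inv ha hR0 hR h hzR
          rw [Fm_eq_neg_phi, abs_neg, abs_of_nonneg h1]
          exact h2.le
      intro z hz
      rcases le_total 0 z with h | h
      · exact key z h ((abs_of_nonneg h) ▸ hz)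
      · have h2 := key (-z) (by linarith) (by rw [← abs_of_nonpos h]; exact hz)
        rwa [Fm_neg, abs_neg] at h2
    have bound_out : ∀ z : ℝ, R < |z| → |Fm a z| ≤ |z| - R := by
      have key : ∀ z : ℝ, R < z → |Fm a z| ≤ z - R := by
        intro z hz
        obtain ⟨h1, h2⟩ := Fm_drift ha hR0 hR hz
        rw [abs_of_pos h1]; exact h2.le
      intro z hz
      rcases le_total 0 z with h | h
      · rw [abs_of_nonneg h] at *
        exact key z hz
      · rw [abs_of_nonpos h] at *
        have h2 := key (-z) hz
        rwa [Fm_neg, abs_neg] at h2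
    have henter : ∀ n : ℕ, |y n| ≤ max R (|y 0| - n * R) := by
      intro n
      induction n with
      | zero => simp
      | succ k ih =>
        have hrec : |y (k+1)| = |Fm a (y k)| := by rw [hyrec k]
        rcases le_or_gt (|y k|) R with h | h
        · rw [hrec]
          exact le_max_of_le_left (bound_in (y k) h)
        · have h2 := bound_out (y k) h
          have h4 : max R (|y 0| - k * R) - R ≤ max R (|y 0| - (k+1 : ℕ) * R) := by
            rcases le_total (|y 0| - (k:ℝ) * R) R with h5 | h5
            · rw [max_eq_left h5]
              have h6 := le_max_left R (|y 0| - ((k:ℝ)+1) * R)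
              push_cast
              linarith
            · rw [max_eq_right h5]
              have h6 := le_max_right R (|y 0| - ((k:ℝ)+1) * R)
              push_cast
              push_cast at h6
              linarith
          rw [hrec]
          calc |Fm a (y k)| ≤ |y k| - R := h2
          _ ≤ max R (|y 0| - k * R) - R := by linarith
          _ ≤ max R (|y 0| - (k+1 : ℕ) * R) := h4
    obtain ⟨N, hN⟩ := exists_nat_ge (|y 0| / R)
    have hNR : |y 0| ≤ N * R := by
      rw [div_le_iff₀ hR0] at hN
      exact hN
    have hinK : ∀ n, N ≤ n → |y n| ≤ R := by
      intro n hn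
      have h1 := henter n
      have h2 : |y 0| - n * R ≤ 0 := by
        have h3 : (N:ℝ) * R ≤ n * R := by
          apply mul_le_mul_of_nonneg_right _ hR0.le
          exact_mod_cast hn
        linarith
      rcases max_cases R (|y 0| - n * R) with ⟨hm, _⟩ | ⟨hm, _⟩ <;> rw [hm] at h1 <;> linarith
    by_cases hzero : ∃ m, y m = 0
    · obtain ⟨m, hm⟩ := hzero
      have hwzero : ∀ k, m ≤ k → w k = 0 := by
        intro k hk
        have hconst : y k = 0 := by
          induction k, hk using Nat.le_induction with
          | base => exact hm
          | succ j hj ih => rw [hyrec j, ih, Fm_zero]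
        simp only [hwdef, hconst, mul_zero]
      have hconv : Tendsto w atTop (nhds 0) :=
        tendsto_atTop_of_eventually_const hwzero
      exact endgame 0 (phi_zero a) hconv
    · push_neg at hzero
      have hwne : ∀ n, w n ≠ 0 := by
        intro n h0
        have h := habs n
        rw [h0, abs_zero] at h
        exact hzero n (abs_eq_zero.1 h.symm)
      -- sign factor
      set sg : ℝ := if 0 < w N then 1 else -1 with hsg
      have hsg1 : sg = 1 ∨ sg = -1 := by
        rcases ite_eq_or_eq (0 < w N) (1:ℝ) (-1) with h | h
        · left; exact h
        · right; exact h
      have hsgsq : sg * sg = 1 := by rcases hsg1 with h | h <;> rw [h] <;> norm_num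
      set ζ : ℕ → ℝ := fun n => sg * w (N + n) with hζ
      have hζrec : ∀ n, ζ (n+1) = phi a (ζ n) := by
        intro n
        simp only [hζ]
        rw [show N + (n+1) = (N + n) + 1 by omega, hwrec (N + n), ← phi_sign hsg1]
      have hζne : ∀ n, ζ n ≠ 0 := by
        intro n h
        rcases mul_eq_zero.1 h with h | h
        · rcases hsg1 with h' | h' <;> rw [h'] at h <;> norm_num at h
        · exact hwne (N + n) h
      have hζ0pos : 0 < ζ 0 := by
        simp only [hζ, add_zero, hsg]
        rcases lt_or_ge 0 (w N) with h | h
        · rw [if_pos h]; linarith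
        · rw [if_neg (not_lt.2 h)]
          have hlt : w N < 0 := lt_of_le_of_ne h (hwne N)
          linarith
      have hζinv : ∀ n, 0 < ζ n ∧ ζ n ≤ R := by
        intro n
        induction n with
        | zero =>
          refine ⟨hζ0pos, ?_⟩
          have h1 : |ζ 0| = |y N| := by
            simp only [hζ, add_zero, abs_mul, ← habs N]
            rcases hsg1 with h | h <;> rw [h] <;> simp
          have h2 := hinK N le_rfl
          rw [← h1] at h2
          exact (abs_le.1 h2).2
        | succ k ih =>
          obtain ⟨ih1, ih2⟩ := ih
          obtain ⟨h1, h2⟩ := phi_inv ha hR0 hR ih1 ih2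
          rw [← hζrec k] at h1 h2
          exact ⟨(hζne (k+1)).lt_or_gt.resolve_left (by linarith), h2.le⟩
      have hdanti : Antitone (fun n => |ζ n - r|) := by
        apply antitone_nat_of_succ_le
        intro n
        rcases eq_or_ne (ζ n) r with h | h
        · simp only [hζrec n, h, phi_fixed hr, le_refl]
        · rw [hζrec n]
          exact (phi_lyap ha hr0 hr (hζinv n).1 h).le
      -- eventually `|ζ M - r| < r`
      have hM : ∃ M, |ζ M - r| < r := by
        by_contra hcon
        push_neg at hcon
        have hKmem : ∀ n, ζ n ∈ Set.Icc (2*r) R := by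
          intro n
          obtain ⟨h1, h2⟩ := hζinv n
          refine ⟨?_, h2⟩
          have hge := hcon n
          rcases abs_cases (ζ n - r) with ⟨heq, _⟩ | ⟨heq, _⟩ <;> rw [heq] at hge <;> linarith
        refine lyap_escape (continuous_phi a) isCompact_Icc (r := r) ?_ hζrec hKmem
        intro v hv
        have h1 : (0:ℝ) < v := by linarith [hv.1]
        exact phi_lyap ha hr0 hr h1 (ne_of_gt (by linarith [hv.1] : r < v))
      obtain ⟨M, hM⟩ := hM
      have hξconv : Tendsto (fun n => ζ (n + M)) atTop (nhds r) := by
        refine lyap_tendsto (continuous_phi a) (phi_fixed hr)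
          (isCompact_Icc (a := r - |ζ M - r|) (b := r + |ζ M - r|)) ?_ ?_ ?_
        · intro v hv hvr
          have h1 : r - |ζ M - r| ≤ v := hv.1
          exact phi_lyap ha hr0 hr (by linarith) hvr
        · intro n
          rw [show n + 1 + M = (n + M) + 1 by omega, hζrec (n + M)]
        · intro n
          have h1 : |ζ (n + M) - r| ≤ |ζ M - r| := hdanti (by omega : M ≤ n + M)
          rcases abs_le.1 h1 with ⟨h2, h3⟩
          exact ⟨by linarith, by linarith⟩
      have hζconv : Tendsto ζ atTop (nhds r) :=
        (tendsto_add_atTop_iff_nat M).1 hξconv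
      have hwconv : Tendsto w atTop (nhds (sg * r)) := by
        have h1 : Tendsto (fun n => sg * ζ n) atTop (nhds (sg * r)) :=
          hζconv.const_mul sg
        have h2 : ∀ n, sg * ζ n = w (N + n) := by
          intro n
          simp only [hζ, ← mul_assoc, hsgsq, one_mul]
        have h3 : Tendsto (fun n => w (n + N)) atTop (nhds (sg * r)) := by
          refine Tendsto.congr (fun n => ?_) h1
          rw [h2 n, add_comm]
        exact (tendsto_add_atTop_iff_nat N).1 h3
      have hfix : phi a (sg * r) = sg * r := by
        rw [phi_sign hsg1, phi_fixed hr]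
      exact endgame (sg * r) hfix hwconv


/-- For `a > 0` and the symmetric map `f_a = f_{a,1/2}`, the trajectory of
every `x ∈ (0,1)` converges to a fixed point or a period-2 orbit of `f_a` in
`(0,1)`: the even and odd subsequences of iterates converge to points
`p, q ∈ (0,1)` with `f_a(p) = q` and `f_a(q) = p`. -/
theorem stmt_9 (a : ℝ) (ha : 0 < a) (x : ℝ) (hx : x ∈ Set.Ioo (0 : ℝ) 1) :
    ∃ p q : ℝ, p ∈ Set.Ioo (0 : ℝ) 1 ∧ q ∈ Set.Ioo (0 : ℝ) 1 ∧
      chaosMap a (1 / 2) p = q ∧ chaosMap a (1 / 2) q = p ∧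
      Filter.Tendsto (fun n : ℕ => (chaosMap a (1 / 2))^[2 * n] x)
        Filter.atTop (nhds p) ∧
      Filter.Tendsto (fun n : ℕ => (chaosMap a (1 / 2))^[2 * n + 1] x)
        Filter.atTop (nhds q) := by
  have hsig : sig (Real.log (x / (1 - x))) = x := sig_log hx
  set y₀ := Real.log (x / (1 - x)) with hy₀
  obtain ⟨P, Q, hPQ, hQP, hP, hQ⟩ := main_orbit ha y₀
  have hhalf : (1:ℝ)/2 = 1/2 := rfl
  refine ⟨sig P, sig Q, ⟨sig_pos P, sig_lt_one P⟩, ⟨sig_pos Q, sig_lt_one Q⟩,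
    ?_, ?_, ?_, ?_⟩
  · rw [chaosMap_sig, hPQ]
  · rw [chaosMap_sig, hQP]
  · have heq : ∀ n : ℕ, (chaosMap a (1/2))^[2*n] x = sig ((Fm a)^[2*n] y₀) := by
      intro n
      rw [← hsig, chaosMap_iter_sig]
    exact Tendsto.congr (fun n => (heq n).symm)
      ((continuous_sig.tendsto P).comp hP)
  · have heq : ∀ n : ℕ, (chaosMap a (1/2))^[2*n+1] x = sig ((Fm a)^[2*n+1] y₀) := by
      intro n
      rw [← hsig, chaosMap_iter_sig]
    exact Tendsto.congr (fun n => (heq n).symm)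
      ((continuous_sig.tendsto Q).comp hQ)
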